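/- Let H be a graph with at least two edges such that g_1(H) < g_2(H), and suppose there exists a connected subgraph H' of H that is not a clique (or is not proper) lying in Cl^c_H with 2 ≤ e(H') < e(H). Then g_2(H) < 1. -/

import Mathlib

open SimpleGraph

noncomputable def vc {V : Type*} {G : SimpleGraph V} (H' : G.Subgraph) : ℕ := H'.verts.ncard
noncomputable def ec {V : Type*} {G : SimpleGraph V} (H' : G.Subgraph) : ℕ := H'.edgeSet.ncard

/-- The subgraph is a clique: every two distinct vertices are adjacent. -/
def cliqueSub {V : Type*} {G : SimpleGraph V} (H' : G.Subgraph) : Prop :=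
  H'.verts.Pairwise H'.Adj

/-- Values `(e(H')-1)/(v(H')-2)` over subgraphs with at least 3 vertices;
its greatest element is the maximum 2-density `m_2`. -/
def m2set {V : Type*} (G : SimpleGraph V) : Set ℚ :=
  {q | ∃ H' : G.Subgraph, 3 ≤ vc H' ∧ q = ((ec H' : ℚ) - 1) / ((vc H' : ℚ) - 2)}

/-- Values `e(H')/v(H')`; greatest element is the maximum density `m`. -/
def mset {V : Type*} (G : SimpleGraph V) : Set ℚ :=
  {q | ∃ H' : G.Subgraph, 1 ≤ vc H' ∧ q = (ec H' : ℚ) / (vc H' : ℚ)}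

/-- The set whose greatest element is `g_1(H)`. -/
def g1set {V : Type*} (G : SimpleGraph V) : Set ℚ :=
  {q | ∃ H' : G.Subgraph, ¬ (H' ≠ ⊤ ∧ cliqueSub H') ∧
    ((2 ≤ ec H' ∧ ec H' < ec (⊤ : G.Subgraph)) ∨ (ec H' = 0 ∧ vc H' = 2)) ∧
    q = ((vc (⊤ : G.Subgraph) : ℚ) - (vc H' : ℚ)) /
        ((ec (⊤ : G.Subgraph) : ℚ) - (ec H' : ℚ))}

/-- The set whose least element is `g_2(H)`. -/
def g2set {V : Type*} (G : SimpleGraph V) : Set ℚ :=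
  {q | ∃ H' : G.Subgraph, 2 ≤ ec H' ∧ ((H' ≠ ⊤ ∧ cliqueSub H') ∨ H' = ⊤) ∧
    q = ((vc H' : ℚ) - 2) / ((ec H' : ℚ) - 1)}


open SimpleGraph in
lemma conn_card_le {W : Type*} [Fintype W] (G : SimpleGraph W) (h : G.Connected) :
    Fintype.card W ≤ G.edgeSet.ncard + 1 := by
  classical
  obtain ⟨u⟩ : Nonempty W := h.nonempty
  choose p hp using fun w => (h w u).exists_walk_length_eq_dist
  set f : W → Sym2 W := fun w =>
    if hw : w = u then s(u, u) else ((p w).firstDart (Walk.not_nil_of_ne hw)).edge with hf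
  have key : ∀ w : W, w ≠ u → G.dist ((p w).getVert 1) u + 1 ≤ G.dist w u := by
    intro w hw
    have hnp : ¬ (p w).Nil := Walk.not_nil_of_ne hw
    have h1 : G.dist ((p w).getVert 1) u ≤ ((p w).tail).length := dist_le _
    have h2 : ((p w).tail).length + 1 = (p w).length := Walk.length_tail_add_one hnp
    have h3 := hp w
    omega
  have hmaps : ∀ w ∈ ({u}ᶜ : Set W), f w ∈ G.edgeSet := by
    intro w hw
    simp only [Set.mem_compl_iff, Set.mem_singleton_iff] at hw
    simp only [hf, dif_neg hw]
    exact ((p w).firstDart (Walk.not_nil_of_ne hw)).edge_mem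
  have hinj : Set.InjOn f ({u}ᶜ : Set W) := by
    intro w hw w' hw' heq
    simp only [Set.mem_compl_iff, Set.mem_singleton_iff] at hw hw'
    by_contra hne
    simp only [hf, dif_neg hw, dif_neg hw', Walk.edge_firstDart, Sym2.eq_iff] at heq
    rcases heq with ⟨rfl, -⟩ | ⟨h1, h2⟩
    · exact hne rfl
    · have k1 := key w hw
      have k2 := key w' hw'
      rw [show (p w).getVert 1 = w' from h2] at k1
      rw [show (p w').getVert 1 = w from h1.symm] at k2
      omega
  have hcard : ({u}ᶜ : Set W).ncard ≤ G.edgeSet.ncard :=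
    Set.ncard_le_ncard_of_injOn f hmaps hinj (Set.toFinite _)
  have hco : ({u}ᶜ : Set W).ncard = Fintype.card W - 1 := by
    have h1 : ({u}ᶜ : Set W) = Set.univ \ {u} := by ext x; simp
    rw [h1, Set.ncard_diff_singleton_of_mem (Set.mem_univ u), Set.ncard_univ,
      Nat.card_eq_fintype_card]
  have hpos : 1 ≤ Fintype.card W := @Fintype.card_pos W _ ⟨u⟩
  omega

/-- If `H` has at least two edges, `g₁(H) < g₂(H)`, and there is a connected
subgraph `H' ∈ Cl^c_H` with `2 ≤ e(H') < e(H)`, then `g₂(H) < 1`. -/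
theorem stmt_3 {V : Type*} [Fintype V] (G : SimpleGraph V)
    (h2 : 2 ≤ ec (⊤ : G.Subgraph))
    (a b : ℚ) (ha : IsGreatest (g1set G) a) (hb : IsLeast (g2set G) b)
    (hab : a < b)
    (hconn : ∃ H' : G.Subgraph, H'.Connected ∧ ¬ (H' ≠ ⊤ ∧ cliqueSub H') ∧
      2 ≤ ec H' ∧ ec H' < ec (⊤ : G.Subgraph)) :
    b < 1 := by
  classical
  obtain ⟨K, hKconn, hKnc, hK2, hKlt⟩ := hconn
  haveI : Fintype ↥K.verts := Fintype.ofFinite _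
  have hvK : vc K ≤ ec K + 1 := by
    have hc := conn_card_le K.coe hKconn.coe
    have hv : Fintype.card ↥K.verts = vc K := by
      rw [vc, ← Nat.card_coe_set_eq, Nat.card_eq_fintype_card]
    have he : K.coe.edgeSet.ncard = ec K := by
      rw [ec, ← K.image_coe_edgeSet_coe,
        Set.ncard_image_of_injective _ (Sym2.map.injective Subtype.val_injective)]
    omega
  have hY : ((vc (⊤ : G.Subgraph) : ℚ) - vc K) / ((ec (⊤ : G.Subgraph) : ℚ) - ec K) ≤ a :=
    ha.2 ⟨K, hKnc, Or.inl ⟨hK2, hKlt⟩, rfl⟩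
  have hM : b ≤ ((vc (⊤ : G.Subgraph) : ℚ) - 2) / ((ec (⊤ : G.Subgraph) : ℚ) - 1) :=
    hb.2 ⟨⊤, h2, Or.inr rfl, rfl⟩
  by_contra hb1
  push_neg at hb1
  set E : ℚ := (ec (⊤ : G.Subgraph) : ℚ) with hEdef
  set Vt : ℚ := (vc (⊤ : G.Subgraph) : ℚ) with hVdef
  set eK : ℚ := (ec K : ℚ) with heKdef
  set vK : ℚ := (vc K : ℚ) with hvKdef
  have heK2 : (2:ℚ) ≤ eK := by rw [heKdef]; exact_mod_cast hK2
  have hEe : eK < E := by rw [heKdef, hEdef]; exact_mod_cast hKlt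
  have hvKq : vK ≤ eK + 1 := by rw [heKdef, hvKdef]; exact_mod_cast hvK
  have hd1 : (0:ℚ) < E - eK := by linarith
  have hd2 : (0:ℚ) < E - 1 := by linarith
  have hA : Vt - vK < b * (E - eK) := (div_lt_iff₀ hd1).mp (lt_of_le_of_lt hY hab)
  have hB : b * (E - 1) ≤ Vt - 2 := (le_div_iff₀ hd2).mp hM
  nlinarith [mul_nonneg (sub_nonneg.2 hb1) (by linarith : (0:ℚ) ≤ eK - 1)]
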